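/- arXiv:1505.03072 — 5 statements merged into one kernel-verified Lean document; each statement's English description precedes it below -/
import Mathlib

section
/- Let n be a positive integer and let p satisfy 0 < p ≤ n^{-2/3}. Then every graph G on n vertices with exactly p·C(n,2) edges contains a full subgraph on at least p^{1/2}·n - 1 vertices; consequently f(n,p) ≥ p^{1/2}·n - 1. -/
open scoped Classical

/-- Number of neighbours of `v` inside `S`. -/
noncomputable def degIn {V : Type*} (G : SimpleGraph V) (S : Finset V) (v : V) : ℕ :=
  (S.filter fun u => G.Adj v u).card

/-- `S` induces a full subgraph for density `p`: every vertex of `S` has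
at least `p * (|S| - 1)` neighbours inside `S`. -/
def IsFull {V : Type*} (G : SimpleGraph V) (p : ℝ) (S : Finset V) : Prop :=
  ∀ v ∈ S, p * ((S.card : ℝ) - 1) ≤ (degIn G S v : ℝ)

/-- the set of non-isolated vertices. -/
noncomputable def nonIso {n : ℕ} (G : SimpleGraph (Fin n)) : Finset (Fin n) :=
  Finset.univ.filter (fun v => ∃ u, G.Adj v u)

/-- a set where every vertex has a neighbour inside. -/
def GoodSet {n : ℕ} (G : SimpleGraph (Fin n)) (S : Finset (Fin n)) : Prop :=
  ∀ v ∈ S, ∃ u ∈ S, G.Adj v u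

/-- the underlying pair of a `Sym2` as a `Finset`. -/
noncomputable def sym2Pair {n : ℕ} : Sym2 (Fin n) → Finset (Fin n) :=
  Sym2.lift ⟨fun a b => ({a, b} : Finset (Fin n)), fun a b => Finset.pair_comm a b⟩

lemma sym2Pair_mk {n : ℕ} (a b : Fin n) : sym2Pair (s(a, b)) = {a, b} := rfl

lemma edge_card_le_nonIso {n : ℕ} (G : SimpleGraph (Fin n)) :
    G.edgeFinset.card ≤ (nonIso G).card.choose 2 := by
  classical
  rw [← Finset.card_powersetCard 2 (nonIso G)]
  apply Finset.card_le_card_of_injOn sym2Pair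
  · intro z hz
    induction z with
    | _ a b =>
      rw [Finset.mem_coe, SimpleGraph.mem_edgeFinset, SimpleGraph.mem_edgeSet] at hz
      rw [sym2Pair_mk, Finset.mem_coe, Finset.mem_powersetCard]
      constructor
      · intro x hx
        simp only [Finset.mem_insert, Finset.mem_singleton] at hx
        rcases hx with rfl | rfl
        · simp [nonIso]; exact ⟨b, hz⟩
        · simp [nonIso]; exact ⟨a, hz.symm⟩
      · rw [Finset.card_pair hz.ne]
  · intro z1 hz1 z2 hz2 h
    simp only [Finset.coe_sort_coe, Finset.mem_coe, SimpleGraph.mem_edgeFinset,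
      SimpleGraph.mem_edgeSet] at hz1 hz2
    induction z1 with
    | _ a b =>
      induction z2 with
      | _ c d =>
        rw [sym2Pair_mk, sym2Pair_mk] at h
        have ha : a ∈ ({c, d} : Finset (Fin n)) := by rw [← h]; simp
        have hb : b ∈ ({c, d} : Finset (Fin n)) := by rw [← h]; simp
        simp only [Finset.mem_insert, Finset.mem_singleton] at ha hb
        have hab : a ≠ b := hz1.ne
        rw [Sym2.eq_iff]
        rcases ha with rfl | rfl <;> rcases hb with rfl | rfl <;> tauto

lemma exists_goodSet {n : ℕ} (G : SimpleGraph (Fin n)) :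
    ∀ k, k ≤ (nonIso G).card →
      ∃ S : Finset (Fin n), GoodSet G S ∧ k ≤ S.card ∧ S.card ≤ k + 1 := by
  intro k
  induction k with
  | zero =>
    intro _
    exact ⟨∅, fun v hv => absurd hv (Finset.notMem_empty v), by simp, by simp⟩
  | succ k ih =>
    intro hk
    obtain ⟨S, hgood, hle, hle'⟩ := ih (Nat.le_of_succ_le hk)
    rcases Nat.lt_or_ge S.card (k + 1) with hlt | hge
    · -- S.card = k, add a new non-isolated vertex together with a neighbour
      have hcard : S.card = k := le_antisymm (Nat.lt_succ_iff.mp hlt) hle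
      have hexists : ∃ v ∈ nonIso G, v ∉ S := by
        by_contra hcon
        push_neg at hcon
        have : nonIso G ⊆ S := fun v hv => hcon v hv
        have := Finset.card_le_card this
        omega
      obtain ⟨v, hvD, hvS⟩ := hexists
      simp only [nonIso, Finset.mem_filter, Finset.mem_univ, true_and] at hvD
      obtain ⟨u, hadj⟩ := hvD
      refine ⟨insert v (insert u S), ?_, ?_, ?_⟩
      · intro w hw
        simp only [Finset.mem_insert] at hw
        rcases hw with rfl | rfl | hw
        · exact ⟨u, by simp, hadj⟩
        · exact ⟨v, by simp, hadj.symm⟩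
        · obtain ⟨u', hu', hadj'⟩ := hgood w hw
          exact ⟨u', by simp [hu'], hadj'⟩
      · have hvu : v ∉ insert u S := by
          simp only [Finset.mem_insert]
          push_neg
          exact ⟨hadj.ne, hvS⟩
        rw [Finset.card_insert_of_notMem hvu]
        have : S.card ≤ (insert u S).card := Finset.card_le_card (Finset.subset_insert u S)
        omega
      · calc (insert v (insert u S)).card ≤ (insert u S).card + 1 :=
              Finset.card_insert_le v _
          _ ≤ S.card + 1 + 1 := by
              have := Finset.card_insert_le u S; omega
          _ = k + 2 := by omega
    · exact ⟨S, hgood, hge, by omega⟩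

/-- if `0 < p ≤ n^(-2/3)`, every `n`-vertex graph with exactly `p * C(n,2)`
edges has a full subgraph on at least `p^(1/2) n - 1` vertices. -/
theorem stmt4 (n : ℕ) (hn : 0 < n) (p : ℝ) (hp0 : 0 < p)
    (hp : p ≤ (n : ℝ) ^ (-(2/3 : ℝ)))
    (G : SimpleGraph (Fin n))
    (hG : (G.edgeFinset.card : ℝ) = p * (n.choose 2 : ℕ)) :
    ∃ S : Finset (Fin n), IsFull G p S ∧ p ^ ((1/2 : ℝ)) * n - 1 ≤ (S.card : ℝ) := by
  classical
  set t : ℝ := p ^ ((1/2 : ℝ)) with ht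
  have hn1 : (1 : ℝ) ≤ (n : ℝ) := by exact_mod_cast hn
  have hp1 : p ≤ 1 := by
    calc p ≤ (n : ℝ) ^ (-(2/3 : ℝ)) := hp
      _ ≤ 1 := Real.rpow_le_one_of_one_le_of_nonpos hn1 (by norm_num)
  have ht0 : 0 < t := Real.rpow_pos_of_pos hp0 _
  have ht1 : t ≤ 1 := Real.rpow_le_one hp0.le hp1 (by norm_num)
  have htt : t * t = p := by
    rw [ht, ← Real.rpow_add hp0]
    norm_num
  have hpt : p * t = p ^ ((3/2 : ℝ)) := by
    rw [ht]
    nth_rewrite 1 [← Real.rpow_one p]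
    rw [← Real.rpow_add hp0]
    norm_num
  -- p^(3/2) * n ≤ 1
  have hkey : p * t * (n : ℝ) ≤ 1 := by
    rw [hpt]
    have h1 : p ^ ((3/2 : ℝ)) ≤ ((n : ℝ) ^ (-(2/3 : ℝ))) ^ ((3/2 : ℝ)) :=
      Real.rpow_le_rpow hp0.le hp (by norm_num)
    have h2 : ((n : ℝ) ^ (-(2/3 : ℝ))) ^ ((3/2 : ℝ)) = (n : ℝ) ^ (-(1 : ℝ)) := by
      rw [← Real.rpow_mul (Nat.cast_nonneg n)]
      norm_num
    have hn0 : (0 : ℝ) < (n : ℝ) := by exact_mod_cast hn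
    calc p ^ ((3/2 : ℝ)) * (n : ℝ) ≤ (n : ℝ) ^ (-(1 : ℝ)) * (n : ℝ) := by
          apply mul_le_mul_of_nonneg_right (h1.trans (le_of_eq h2)) hn0.le
      _ = 1 := by
          rw [Real.rpow_neg_one]
          field_simp
  rcases le_or_gt (t * (n : ℝ)) 1 with hsmall | hbig
  · -- trivial case: the empty set works
    refine ⟨∅, fun v hv => absurd hv (Finset.notMem_empty v), ?_⟩
    simp only [Finset.card_empty, Nat.cast_zero]
    linarith
  · -- main case
    have hn0 : (0 : ℝ) < (n : ℝ) := by exact_mod_cast hn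
    have hn2' : 2 ≤ n := by
      by_contra h
      push_neg at h
      have hone : n = 1 := by omega
      rw [hone] at hbig
      norm_num at hbig
      linarith
    have hn2 : (2 : ℝ) ≤ (n : ℝ) := by exact_mod_cast hn2'
    set N := (nonIso G).card with hN
    have hecard : (G.edgeFinset.card : ℝ) ≤ (N.choose 2 : ℕ) := by
      exact_mod_cast edge_card_le_nonIso G
    have hchoose_n : ((n.choose 2 : ℕ) : ℝ) = (n : ℝ) * ((n : ℝ) - 1) / 2 :=
      Nat.cast_choose_two (K := ℝ) n
    have hchoose_N : ((N.choose 2 : ℕ) : ℝ) = (N : ℝ) * ((N : ℝ) - 1) / 2 :=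
      Nat.cast_choose_two (K := ℝ) N
    -- edge count is positive
    have hepos : (0 : ℝ) < (G.edgeFinset.card : ℝ) := by
      rw [hG, hchoose_n]
      have : (0:ℝ) < (n : ℝ) * ((n : ℝ) - 1) / 2 := by nlinarith
      positivity
    have hN2 : (2 : ℝ) ≤ (N : ℝ) := by
      by_contra hcon
      push_neg at hcon
      have hNlt : N < 2 := by exact_mod_cast hcon
      have hz : N.choose 2 = 0 := Nat.choose_eq_zero_of_lt hNlt
      have : (G.edgeFinset.card : ℝ) ≤ 0 := by
        rw [hz] at hecard
        exact_mod_cast hecard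
      linarith
    -- t * n ≤ N
    have htnN : t * (n : ℝ) ≤ (N : ℝ) := by
      by_contra hcon
      push_neg at hcon
      have h1 : p * ((n : ℝ) * ((n : ℝ) - 1)) ≤ (N : ℝ) * ((N : ℝ) - 1) := by
        have := hG ▸ hecard
        rw [hchoose_n, hchoose_N] at this
        linarith
      nlinarith [mul_pos ht0 hn0]
    -- pick a good set of the right size
    have hceil : ⌈t * (n : ℝ)⌉₊ ≤ N := Nat.ceil_le.mpr htnN
    have hceil1 : 1 ≤ ⌈t * (n : ℝ)⌉₊ := by
      rw [Nat.one_le_ceil_iff]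
      linarith
    obtain ⟨S, hgood, hSlb, hSub⟩ :=
      exists_goodSet G (⌈t * (n : ℝ)⌉₊ - 1) (by omega)
    have hSub' : S.card ≤ ⌈t * (n : ℝ)⌉₊ := by omega
    have hScard_le : (S.card : ℝ) ≤ t * (n : ℝ) + 1 := by
      have h1 : (S.card : ℝ) ≤ (⌈t * (n : ℝ)⌉₊ : ℝ) := by exact_mod_cast hSub'
      have h2 : (⌈t * (n : ℝ)⌉₊ : ℝ) < t * (n : ℝ) + 1 :=
        Nat.ceil_lt_add_one (by positivity)
      linarith
    refine ⟨S, ?_, ?_⟩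
    · intro v hv
      obtain ⟨u, huS, hadj⟩ := hgood v hv
      have hdeg : 1 ≤ degIn G S v := by
        rw [degIn, ← Finset.card_singleton u]
        apply Finset.card_le_card
        intro x hx
        simp only [Finset.mem_singleton] at hx
        subst hx
        exact Finset.mem_filter.mpr ⟨huS, hadj⟩
      have hdeg' : (1 : ℝ) ≤ (degIn G S v : ℝ) := by exact_mod_cast hdeg
      have : p * ((S.card : ℝ) - 1) ≤ p * (t * (n : ℝ)) := by
        apply mul_le_mul_of_nonneg_left _ hp0.le
        linarith
      calc p * ((S.card : ℝ) - 1) ≤ p * (t * (n : ℝ)) := this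
        _ = p * t * (n : ℝ) := by ring
        _ ≤ 1 := hkey
        _ ≤ (degIn G S v : ℝ) := hdeg'
    · have h1 : ((⌈t * (n : ℝ)⌉₊ - 1 : ℕ) : ℝ) = (⌈t * (n : ℝ)⌉₊ : ℝ) - 1 := by
        have : 1 ≤ ⌈t * (n : ℝ)⌉₊ := hceil1
        push_cast [Nat.cast_sub this]
        ring
      have h2 : t * (n : ℝ) ≤ (⌈t * (n : ℝ)⌉₊ : ℝ) := Nat.le_ceil _
      have h3 : ((⌈t * (n : ℝ)⌉₊ - 1 : ℕ) : ℝ) ≤ (S.card : ℝ) := by exact_mod_cast hSlb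
      rw [ht]
      linarith [h1 ▸ h3]
end

section
/- Suppose G is a graph of density p that is (p,j)-jumbled for some j > 0. Then G contains a full subgraph on at least disc⁺(G)/j vertices, i.e., f(G) ≥ disc⁺(G)/j. -/
open scoped Classical

/-- Number of edges of `G` inside `S`. -/
noncomputable def edgesIn {V : Type*} [Fintype V] (G : SimpleGraph V) (S : Finset V) : ℕ :=
  (G.edgeFinset.filter fun e => ∀ v ∈ e, v ∈ S).card

/-- `δ_p(S) = e(S) - p * C(|S|, 2)`. -/
noncomputable def disc {V : Type*} [Fintype V] (G : SimpleGraph V) (p : ℝ) (S : Finset V) : ℝ :=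
  (edgesIn G S : ℝ) - p * (S.card.choose 2 : ℕ)

/-- The positive `p`-discrepancy: the maximum of `δ_p` over all vertex subsets. -/
noncomputable def discPlus {V : Type*} [Fintype V] (G : SimpleGraph V) (p : ℝ) : ℝ :=
  Finset.univ.sup' Finset.univ_nonempty (fun S : Finset V => disc G p S)

lemma degIn_eq {V : Type*} [Fintype V] (G : SimpleGraph V) (S : Finset V) (v : V) (hv : v ∈ S) :
    ((G.edgeFinset.filter fun e => (∀ w ∈ e, w ∈ S) ∧ v ∈ e)).card = degIn G S v := by
  unfold degIn
  symm
  apply Finset.card_bij (fun u _ => s(v, u))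
  · intro u hu
    simp only [Finset.mem_filter] at hu ⊢
    refine ⟨SimpleGraph.mem_edgeFinset.mpr hu.2, ?_, Sym2.mem_mk_left _ _⟩
    intro w hw
    rcases Sym2.mem_iff.mp hw with h | h
    · subst h; exact hv
    · subst h; exact hu.1
  · intro a ha b hb h
    exact (Sym2.congr_right).mp h
  · intro e he
    simp only [Finset.mem_filter] at he
    obtain ⟨hE, hsub, hve⟩ := he
    refine ⟨Sym2.Mem.other hve, ?_, Sym2.other_spec hve⟩
    simp only [Finset.mem_filter]
    refine ⟨hsub _ (Sym2.other_mem hve), ?_⟩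
    have : e ∈ G.edgeSet := SimpleGraph.mem_edgeFinset.mp hE
    rwa [← Sym2.other_spec hve, SimpleGraph.mem_edgeSet] at this

lemma edgesIn_erase {V : Type*} [Fintype V] (G : SimpleGraph V) (S : Finset V) (v : V)
    (hv : v ∈ S) : edgesIn G S = edgesIn G (S.erase v) + degIn G S v := by
  unfold edgesIn
  rw [← degIn_eq G S v hv]
  have hsplit := Finset.card_filter_add_card_filter_not
    (s := G.edgeFinset.filter fun e => ∀ w ∈ e, w ∈ S) (p := fun e => v ∈ e)
  rw [Finset.filter_filter, Finset.filter_filter] at hsplit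
  have hcongr : (G.edgeFinset.filter fun e => ∀ w ∈ e, w ∈ S.erase v)
      = G.edgeFinset.filter fun e => (∀ w ∈ e, w ∈ S) ∧ ¬ v ∈ e := by
    apply Finset.filter_congr
    intro e _
    simp only [Finset.mem_erase]
    constructor
    · intro h
      exact ⟨fun w hw => (h w hw).2, fun hve => (h v hve).1 rfl⟩
    · intro ⟨h1, h2⟩ w hw
      exact ⟨fun hwv => h2 (hwv ▸ hw), h1 w hw⟩
  rw [hcongr]
  omega

lemma disc_erase {V : Type*} [Fintype V] (G : SimpleGraph V) (p : ℝ) (S : Finset V) (v : V)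
    (hv : v ∈ S) :
    disc G p (S.erase v) = disc G p S - (degIn G S v : ℝ) + p * ((S.card : ℝ) - 1) := by
  have hc : 1 ≤ S.card := Finset.card_pos.mpr ⟨v, hv⟩
  have hcard : (S.erase v).card = S.card - 1 := Finset.card_erase_of_mem hv
  have hch : (S.erase v).card.choose 2 + (S.card - 1) = S.card.choose 2 := by
    rw [hcard]
    have := Nat.choose_succ_succ (S.card - 1) 1
    have h2 : S.card - 1 + 1 = S.card := Nat.succ_pred_eq_of_pos hc
    rw [Nat.succ_eq_add_one, h2, Nat.choose_one_right, show Nat.succ 1 = 2 from rfl] at this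
    omega
  have hed := edgesIn_erase G S v hv
  unfold disc
  have hchR : ((S.erase v).card.choose 2 : ℝ) = (S.card.choose 2 : ℝ) - ((S.card : ℝ) - 1) := by
    have : ((S.erase v).card.choose 2 : ℝ) + ((S.card : ℝ) - 1) = (S.card.choose 2 : ℝ) := by
      rw [show ((S.card : ℝ) - 1) = ((S.card - 1 : ℕ) : ℝ) by
        push_cast [Nat.cast_sub hc]; ring]
      exact_mod_cast hch
    linarith
  have hedR : (edgesIn G (S.erase v) : ℝ) = (edgesIn G S : ℝ) - (degIn G S v : ℝ) := by
    rw [hed]; push_cast; ring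
  rw [hedR, hchR]; ring

/-- if `G` has density `p` and is `(p,j)`-jumbled (`|δ_p(X)| ≤ j|X|` for
all `X`) with `j > 0`, then `G` has a full subgraph on at least `disc⁺(G)/j` vertices. -/
theorem stmt5 {V : Type*} [Fintype V] (G : SimpleGraph V) (p j : ℝ) (hj : 0 < j)
    (hp : (G.edgeFinset.card : ℝ) = p * ((Fintype.card V).choose 2 : ℕ))
    (hjum : ∀ S : Finset V, |disc G p S| ≤ j * S.card) :
    ∃ S : Finset V, IsFull G p S ∧ discPlus G p / j ≤ (S.card : ℝ) := by
  obtain ⟨S, -, hS⟩ := Finset.exists_max_image (Finset.univ : Finset (Finset V))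
    (disc G p) Finset.univ_nonempty
  refine ⟨S, ?_, ?_⟩
  · intro v hv
    have hle := hS (S.erase v) (Finset.mem_univ _)
    have := disc_erase G p S v hv
    linarith
  · have h1 : discPlus G p ≤ disc G p S :=
      Finset.sup'_le _ _ fun T _ => hS T (Finset.mem_univ T)
    have h2 := hjum S
    have h3 := le_abs_self (disc G p S)
    rw [div_le_iff₀ hj]
    nlinarith
end

section
/- Let G be a graph, p ∈ [0,1], and let X ⊆ V(G) be a set attaining the maximum of δ_p over all vertex subsets, i.e., δ_p(X) = disc_p⁺(G). Then the induced subgraph G[X] is p-full: every vertex of X has at least p(|X|-1) neighbours inside X. -/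
open scoped Classical

lemma key {V : Type*} [Fintype V] (G : SimpleGraph V) (X : Finset V) (v : V) (hv : v ∈ X) :
    edgesIn G X = edgesIn G (X.erase v) + degIn G X v := by
  classical
  set S := G.edgeFinset.filter (fun e => ∀ w ∈ e, w ∈ X) with hS
  have hsplit : (S.filter fun e => v ∉ e).card + (S.filter fun e => v ∈ e).card = S.card := by
    simpa using Finset.card_filter_add_card_filter_not (s := S)
      (p := fun e => v ∉ e)
  have h1 : (S.filter fun e => v ∉ e) =
      G.edgeFinset.filter (fun e => ∀ w ∈ e, w ∈ X.erase v) := by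
    ext e
    simp only [hS, Finset.filter_filter, Finset.mem_filter, Finset.mem_erase, and_assoc]
    constructor
    · rintro ⟨he, hall, hnv⟩
      exact ⟨he, fun w hw => ⟨fun h => hnv (h ▸ hw), hall w hw⟩⟩
    · rintro ⟨he, hall⟩
      exact ⟨he, fun w hw => (hall w hw).2, fun h => (hall v h).1 rfl⟩
  have h2 : degIn G X v = (S.filter fun e => v ∈ e).card := by
    rw [degIn]
    apply Finset.card_bij (fun u _ => s(v, u))
    · intro u hu
      obtain ⟨huX, hadj⟩ := Finset.mem_filter.mp hu
      simp only [hS, Finset.mem_filter, SimpleGraph.mem_edgeFinset]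
      refine ⟨⟨hadj, ?_⟩, Sym2.mem_mk_left _ _⟩
      intro w hw
      rcases Sym2.mem_iff.mp hw with h | h <;> subst h
      · exact hv
      · exact huX
    · intro u1 h1 u2 h2 h
      exact (Sym2.congr_right).mp h
    · intro e he
      simp only [hS, Finset.filter_filter, Finset.mem_filter, SimpleGraph.mem_edgeFinset] at he
      obtain ⟨hee, hall, hve⟩ := he
      obtain ⟨u, rfl⟩ := Sym2.mem_iff_exists.mp hve
      refine ⟨u, ?_, rfl⟩
      simp only [Finset.mem_filter]
      exact ⟨hall u (Sym2.mem_mk_right _ _), hee⟩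
  rw [edgesIn, edgesIn, ← hS, ← hsplit, h1, h2]


/-- a vertex subset attaining the maximum positive `p`-discrepancy induces
a `p`-full subgraph. -/
theorem stmt7 {V : Type*} [Fintype V] (G : SimpleGraph V) (p : ℝ)
    (hp0 : 0 ≤ p) (hp1 : p ≤ 1) (X : Finset V)
    (hX : disc G p X = discPlus G p) :
    IsFull G p X := by
  intro v hv
  have : Nonempty V := ⟨v⟩
  have hle : disc G p (X.erase v) ≤ disc G p X := by
    rw [hX]
    exact Finset.le_sup' (fun S : Finset V => disc G p S) (Finset.mem_univ _)
  obtain ⟨m, hm⟩ : ∃ m, X.card = m + 1 :=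
    ⟨X.card - 1, (Nat.succ_pred_eq_of_pos (Finset.card_pos.mpr ⟨v, hv⟩)).symm⟩
  have hkey := key G X v hv
  have hcard : (X.erase v).card = m := by
    rw [Finset.card_erase_of_mem hv, hm]; rfl
  have hch : X.card.choose 2 = m.choose 2 + m := by
    rw [hm, Nat.choose_succ_succ', Nat.choose_one_right, Nat.add_comm]
  rw [disc, disc, hkey, hcard, hch] at hle
  have hmr : ((X.card : ℝ) - 1) = (m : ℝ) := by rw [hm]; push_cast; ring
  rw [hmr]
  push_cast at hle
  linarith
end

section
/- Let G be a graph on n vertices. Then G contains a relatively half-full induced subgraph on ⌊n/2⌋ or ⌊n/2⌋ + 1 vertices. -/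
open scoped Classical

/-- `S` induces a relatively `q`-full subgraph: every `v ∈ S` has at least `q · d_G(v)`
neighbours inside `S`. -/
def RelFull {V : Type*} [Fintype V] (G : SimpleGraph V) (q : ℝ) (S : Finset V) : Prop :=
  ∀ v ∈ S, q * (G.degree v : ℝ) ≤ (degIn G S v : ℝ)

lemma degIn_add_compl {V : Type*} [Fintype V] (G : SimpleGraph V) (S : Finset V) (u : V) :
    degIn G S u + degIn G (Finset.univ \ S) u = G.degree u := by
  unfold degIn
  rw [← Finset.card_union_of_disjoint (Finset.disjoint_filter_filter Finset.disjoint_sdiff),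
    ← Finset.filter_union, Finset.union_sdiff_of_subset (Finset.subset_univ S)]
  simp [SimpleGraph.degree, SimpleGraph.neighborFinset_eq_filter]

lemma sum_degIn_insert {V : Type*} (G : SimpleGraph V) {S : Finset V} {u : V} (hu : u ∉ S) :
    ∑ v ∈ insert u S, degIn G (insert u S) v
      = (∑ v ∈ S, degIn G S v) + 2 * degIn G S u := by
  classical
  rw [Finset.sum_insert hu]
  have h1 : degIn G (insert u S) u = degIn G S u := by
    unfold degIn
    rw [Finset.filter_insert]
    simp [G.irrefl]
  have h2 : ∀ v ∈ S, degIn G (insert u S) v = degIn G S v + (if G.Adj v u then 1 else 0) := by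
    intro v hv
    unfold degIn
    rw [Finset.filter_insert]
    by_cases hadj : G.Adj v u
    · simp only [if_pos hadj]
      exact Finset.card_insert_of_notMem (fun h => hu (Finset.mem_filter.mp h).1)
    · simp [hadj]
  rw [Finset.sum_congr rfl h2, Finset.sum_add_distrib]
  have h3 : (∑ v ∈ S, if G.Adj v u then 1 else 0) = degIn G S u := by
    unfold degIn
    rw [Finset.card_filter]
    exact Finset.sum_congr rfl fun v _ => by simp [SimpleGraph.adj_comm]
  rw [h1, h3]
  ring

/-- The potential function: sum of inside-degrees minus sum of full degrees. -/
noncomputable def Phi {V : Type*} [Fintype V] (G : SimpleGraph V) (S : Finset V) : ℤ :=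
  (∑ v ∈ S, (degIn G S v : ℤ)) - ∑ v ∈ S, (G.degree v : ℤ)

lemma Phi_insert {V : Type*} [Fintype V] (G : SimpleGraph V) {S : Finset V} {u : V}
    (hu : u ∉ S) :
    Phi G (insert u S) = Phi G S + 2 * (degIn G S u : ℤ) - (G.degree u : ℤ) := by
  unfold Phi
  have hc : (∑ v ∈ insert u S, (degIn G (insert u S) v : ℤ))
      = (∑ v ∈ S, (degIn G S v : ℤ)) + 2 * (degIn G S u : ℤ) := by
    exact_mod_cast congrArg (Nat.cast (R := ℤ)) (sum_degIn_insert G hu)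
  rw [hc, Finset.sum_insert hu]
  ring

lemma degIn_erase_self {V : Type*} (G : SimpleGraph V) (S : Finset V) (v : V) :
    degIn G (S.erase v) v = degIn G S v := by
  unfold degIn
  rw [Finset.filter_erase, Finset.erase_eq_of_notMem (by simp [G.irrefl])]

lemma Phi_erase {V : Type*} [Fintype V] (G : SimpleGraph V) {S : Finset V} {v : V}
    (hv : v ∈ S) :
    Phi G (S.erase v) = Phi G S - 2 * (degIn G S v : ℤ) + (G.degree v : ℤ) := by
  have h := Phi_insert G (S := S.erase v) (u := v) (Finset.notMem_erase v S)
  rw [Finset.insert_erase hv, degIn_erase_self] at h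
  linarith

/-- every `n`-vertex graph has a relatively half-full induced subgraph on
`⌊n/2⌋` or `⌊n/2⌋ + 1` vertices. -/
theorem stmt10 {V : Type*} [Fintype V] (G : SimpleGraph V) :
    ∃ S : Finset V,
      (S.card = Fintype.card V / 2 ∨ S.card = Fintype.card V / 2 + 1) ∧
      RelFull G (1/2 : ℝ) S := by
  classical
  set n := Fintype.card V with hn
  set m := n / 2 with hm
  obtain ⟨T, _, hTcard⟩ := Finset.exists_subset_card_eq (s := (Finset.univ : Finset V)) (n := m)
    (by rw [Finset.card_univ]; exact Nat.div_le_self _ _)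
  set F : Finset (Finset V) :=
    Finset.univ.filter (fun S => S.card = m ∨ S.card = m + 1) with hF
  have hFne : F.Nonempty := ⟨T, by simp [hF, hTcard]⟩
  obtain ⟨S, hSF, hSmax⟩ := F.exists_max_image (Phi G) hFne
  have hScard : S.card = m ∨ S.card = m + 1 := by simpa [hF] using hSF
  rcases hScard with h | h
  · -- use the complement
    refine ⟨Finset.univ \ S, ?_, ?_⟩
    · have hc : (Finset.univ \ S).card = n - m := by
        rw [Finset.card_sdiff_of_subset (Finset.subset_univ S), Finset.card_univ, h, ← hn]
      rw [hc]; omega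
    · intro u hu
      by_contra hlt
      push_neg at hlt
      have huS : u ∉ S := (Finset.mem_sdiff.mp hu).2
      have hsplit := degIn_add_compl G S u
      have h2 : (G.degree u : ℤ) + 1 ≤ 2 * (degIn G S u : ℤ) := by
        have : 2 * degIn G (Finset.univ \ S) u < G.degree u := by
          have := hlt
          have hcast : (degIn G (Finset.univ \ S) u : ℝ) < (G.degree u : ℝ) / 2 := by
            linarith
          have : (2 * degIn G (Finset.univ \ S) u : ℝ) < (G.degree u : ℝ) := by
            push_cast; linarith
          exact_mod_cast this
        omega
      have hkey : Phi G S + 1 ≤ Phi G (insert u S) := by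
        rw [Phi_insert G huS]; linarith
      have hmem : insert u S ∈ F := by
        simp [hF, Finset.card_insert_of_notMem huS, h]
      have := hSmax _ hmem
      omega
  · -- S itself works
    refine ⟨S, Or.inr (by rw [h]), ?_⟩
    intro v hv
    by_contra hlt
    push_neg at hlt
    have h2 : 2 * (degIn G S v : ℤ) + 1 ≤ (G.degree v : ℤ) := by
      have : (2 * degIn G S v : ℝ) < (G.degree v : ℝ) := by push_cast; linarith
      exact_mod_cast this
    have hkey : Phi G S + 1 ≤ Phi G (S.erase v) := by
      rw [Phi_erase G hv]; linarith
    have hmem : S.erase v ∈ F := by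
      simp [hF, Finset.card_erase_of_mem hv, h]
    have := hSmax _ hmem
    omega
end

section
/- Let G be a graph on n vertices and let r be a positive integer. Then G contains a relatively (1/r)-full induced subgraph on m vertices for some m ∈ {⌊n/r⌋, ⌈n/r⌉, ⌈n/r⌉ + 1}. -/
open scoped Classical

set_option linter.unusedSectionVars false
set_option maxHeartbeats 1000000

namespace Stmt13

open Finset

variable {V : Type*} [Fintype V] (G : SimpleGraph V)

lemma degIn_insert (S : Finset V) (y v : V) (hy : y ∉ S) :
    degIn G (insert y S) v = degIn G S v + (if G.Adj v y then 1 else 0) := by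
  unfold degIn
  rw [Finset.filter_insert]
  split_ifs with h
  · rw [Finset.card_insert_of_notMem (fun hc => hy (Finset.mem_of_mem_filter _ hc))]
  · simp

lemma degIn_erase (S : Finset V) (x v : V) (hx : x ∈ S) :
    degIn G S v = degIn G (S.erase x) v + (if G.Adj v x then 1 else 0) := by
  conv_lhs => rw [← Finset.insert_erase hx]
  rw [degIn_insert G _ x v (Finset.notMem_erase x S)]

lemma degIn_erase_self (S : Finset V) (x : V) :
    degIn G (S.erase x) x = degIn G S x := by
  by_cases hx : x ∈ S
  · rw [degIn_erase G S x x hx]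
    simp
  · rw [Finset.erase_eq_of_notMem hx]

lemma degIn_eq_sum (S : Finset V) (v : V) :
    degIn G S v = ∑ u ∈ S, (if G.Adj v u then 1 else 0) :=
  Finset.card_filter _ _

noncomputable def eW (S : Finset V) : ℕ := ∑ v ∈ S, degIn G S v

lemma eW_insert (S : Finset V) (y : V) (hy : y ∉ S) :
    eW G (insert y S) = eW G S + 2 * degIn G S y := by
  unfold eW
  rw [Finset.sum_insert hy]
  have h1 : degIn G (insert y S) y = degIn G S y := by
    rw [degIn_insert G S y y hy]; simp
  have h2 : ∀ v ∈ S, degIn G (insert y S) v = degIn G S v + (if G.Adj v y then 1 else 0) :=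
    fun v _ => degIn_insert G S y v hy
  rw [h1, Finset.sum_congr rfl h2, Finset.sum_add_distrib]
  have h3 : ∑ v ∈ S, (if G.Adj v y then 1 else 0) = degIn G S y := by
    rw [degIn_eq_sum]
    exact Finset.sum_congr rfl fun u _ => if_congr (G.adj_comm u y) rfl rfl
  rw [h3]; ring

lemma eW_move (S : Finset V) (x y : V) (hx : x ∈ S) (hy : y ∉ S) :
    eW G (insert y (S.erase x)) + 2 * degIn G S x
      = eW G S + 2 * degIn G (S.erase x) y := by
  have h1 : eW G (insert y (S.erase x)) = eW G (S.erase x) + 2 * degIn G (S.erase x) y :=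
    eW_insert G _ y (fun hc => hy (Finset.mem_of_mem_erase hc))
  have h2 : eW G S = eW G (S.erase x) + 2 * degIn G (S.erase x) x := by
    conv_lhs => rw [← Finset.insert_erase hx]
    rw [eW_insert G _ x (Finset.notMem_erase x S)]
  rw [h1, h2, degIn_erase_self]
  ring

noncomputable def part {r : ℕ} (φ : V → Fin r) (i : Fin r) : Finset V :=
  univ.filter fun v => φ v = i

lemma mem_part {r : ℕ} {φ : V → Fin r} {i : Fin r} {v : V} :
    v ∈ part φ i ↔ φ v = i := by simp [part]

lemma sum_degIn_part {r : ℕ} (φ : V → Fin r) (v : V) :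
    ∑ i, degIn G (part φ i) v = G.degree v := by
  have h1 : ∀ i : Fin r, degIn G (part φ i) v
      = ∑ u ∈ univ, if φ u = i ∧ G.Adj v u then 1 else 0 := by
    intro i
    unfold degIn part
    rw [Finset.filter_filter, Finset.card_filter]
  rw [Finset.sum_congr rfl fun i _ => h1 i, Finset.sum_comm]
  have h2 : ∀ u : V, (∑ i : Fin r, if φ u = i ∧ G.Adj v u then (1:ℕ) else 0)
      = if G.Adj v u then 1 else 0 := by
    intro u
    by_cases h : G.Adj v u
    · simp only [h, and_true]
      simp [Finset.sum_ite_eq]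
    · simp [h]
  rw [Finset.sum_congr rfl fun u _ => h2 u, ← Finset.card_filter]
  unfold SimpleGraph.degree
  congr 1
  ext u
  simp [SimpleGraph.mem_neighborFinset]

lemma sum_card_part {r : ℕ} (φ : V → Fin r) :
    ∑ i, (part φ i).card = Fintype.card V := by
  have h1 : ∀ i : Fin r, (part φ i).card = ∑ u ∈ univ, if φ u = i then 1 else 0 := by
    intro i; unfold part; rw [Finset.card_filter]
  rw [Finset.sum_congr rfl fun i _ => h1 i, Finset.sum_comm]
  have h2 : ∀ u : V, (∑ i : Fin r, if φ u = i then (1:ℕ) else 0) = 1 := by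
    intro u; simp [Finset.sum_ite_eq]
  rw [Finset.sum_congr rfl fun u _ => h2 u]
  simp [Finset.card_univ]

lemma exists_equi :
    ∀ (r q s : ℕ) (S : Finset V), s < r → S.card = q * r + s →
    ∃ A : Fin r → Finset V, (∀ i, A i ⊆ S) ∧ (∀ v ∈ S, ∃ i, v ∈ A i) ∧
      (∀ i j, i ≠ j → Disjoint (A i) (A j)) ∧ (∀ i, (A i).card = q ∨ (A i).card = q + 1) := by
  intro r
  induction r with
  | zero => intro q s S hs; omega
  | succ R IH =>
    intro q s S hs hcard
    rcases Nat.eq_zero_or_pos R with hR | hR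
    · subst hR
      have hs0 : s = 0 := by omega
      refine ⟨fun _ => S, fun _ => subset_rfl, fun v hv => ⟨0, hv⟩,
        fun i j hij => absurd (Fin.ext (by omega)) hij, fun i => Or.inl ?_⟩
      rw [hcard, hs0]; ring
    · set t := if s = 0 then q else q + 1 with ht_def
      have ht : t ≤ S.card := by
        have : q ≤ q * (R + 1) := Nat.le_mul_of_pos_right q (by omega)
        rw [hcard]; rw [ht_def]; split <;> omega
      obtain ⟨T, hTS, hTcard⟩ := Finset.exists_subset_card_eq ht
      set s' := if s = 0 then 0 else s - 1 with hs'_def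
      have hrem : (S \ T).card = q * R + s' := by
        rw [Finset.card_sdiff_of_subset hTS, hTcard, hcard, ht_def, hs'_def, Nat.mul_succ]
        split <;> omega
      obtain ⟨A', h1', h2', h3', h4'⟩ := IH q s' (S \ T) (by rw [hs'_def]; split <;> omega) hrem
      refine ⟨Fin.cons T A', ?_, ?_, ?_, ?_⟩
      · intro i
        refine Fin.cases ?_ ?_ i
        · simpa using hTS
        · intro j
          simpa using (h1' j).trans (Finset.sdiff_subset)
      · intro v hv
        by_cases hvT : v ∈ T
        · exact ⟨0, by simpa using hvT⟩
        · obtain ⟨j, hj⟩ := h2' v (Finset.mem_sdiff.2 ⟨hv, hvT⟩)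
          exact ⟨j.succ, by simpa using hj⟩
      · intro i j hij
        have hTdisj : ∀ k, Disjoint T (A' k) := by
          intro k
          exact Finset.disjoint_sdiff.mono_right (h1' k)
        rcases Fin.eq_zero_or_eq_succ i with hi | ⟨i', hi⟩ <;>
          rcases Fin.eq_zero_or_eq_succ j with hj | ⟨j', hj⟩ <;> subst hi <;> subst hj
        · exact absurd rfl hij
        · simpa using hTdisj j'
        · simpa using (hTdisj i').symm
        · have hne : i' ≠ j' := fun h => hij (by rw [h])
          simpa using h3' i' j' hne
      · intro i
        refine Fin.cases ?_ ?_ i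
        · simp only [Fin.cons_zero]
          rw [hTcard, ht_def]
          split
          · exact Or.inl rfl
          · exact Or.inr rfl
        · intro j; simpa using h4' j


lemma exists_bal {r : ℕ} (hr : 0 < r) :
    ∃ φ : V → Fin r, ∀ i, (part φ i).card = Fintype.card V / r ∨
      ((part φ i).card = Fintype.card V / r + 1 ∧ Fintype.card V % r ≠ 0) := by
  set n := Fintype.card V with hn
  set q := n / r with hq
  set s := n % r with hs
  have hcard : (univ : Finset V).card = q * r + s := by
    rw [Finset.card_univ, ← hn, hq, hs, Nat.mul_comm]
    exact (Nat.div_add_mod n r).symm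
  obtain ⟨A, h1, h2, h3, h4⟩ := exists_equi r q s univ (Nat.mod_lt _ hr) hcard
  have hφex : ∀ v : V, ∃ i, v ∈ A i := fun v => h2 v (mem_univ v)
  set φ : V → Fin r := fun v => Classical.choose (hφex v) with hφ
  have hφmem : ∀ v, v ∈ A (φ v) := fun v => Classical.choose_spec (hφex v)
  have hpart : ∀ i, part φ i = A i := by
    intro i
    ext v
    rw [mem_part]
    constructor
    · intro h; rw [← h]; exact hφmem v
    · intro h
      by_contra hne
      exact (Finset.disjoint_left.1 (h3 _ _ hne) (hφmem v)) h
  refine ⟨φ, fun i => ?_⟩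
  rw [hpart]
  rcases h4 i with h | h
  · exact Or.inl h
  · refine Or.inr ⟨h, ?_⟩
    intro hs0
    have hsum : ∑ j, (A j).card = n := by
      rw [hn]
      conv_rhs => rw [← sum_card_part φ]
      exact Finset.sum_congr rfl fun j _ => by rw [hpart]
    have hle : ∀ j : Fin r, j ∈ (univ : Finset (Fin r)) → q ≤ (A j).card := by
      intro j _
      rcases h4 j with hj | hj <;> omega
    have hlt : ∑ _j : Fin r, q < ∑ j, (A j).card :=
      Finset.sum_lt_sum hle ⟨i, mem_univ i, by omega⟩
    rw [hsum, Finset.sum_const, Finset.card_univ, Fintype.card_fin, smul_eq_mul] at hlt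
    have hn2 : r * q + s = n := by rw [hq, hs]; exact Nat.div_add_mod n r
    omega

lemma relFull_intro {r : ℕ} (hr : 0 < r) (S : Finset V)
    (h : ∀ v ∈ S, G.degree v ≤ r * degIn G S v) : RelFull G (1/(r:ℝ)) S := by
  intro v hv
  have hrR : (0:ℝ) < r := by exact_mod_cast hr
  rw [one_div, inv_mul_le_iff₀ hrR]
  exact_mod_cast h v hv

lemma not_relFull_extract {r : ℕ} (hr : 0 < r) (S : Finset V)
    (h : ¬ RelFull G (1/(r:ℝ)) S) : ∃ v ∈ S, r * degIn G S v < G.degree v := by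
  unfold RelFull at h
  push_neg at h
  obtain ⟨v, hv, hlt⟩ := h
  refine ⟨v, hv, ?_⟩
  have hrR : (0:ℝ) < r := by exact_mod_cast hr
  rw [one_div] at hlt
  have h2 : (r:ℝ) * (degIn G S v : ℝ) < (r:ℝ) * ((r:ℝ)⁻¹ * (G.degree v : ℝ)) :=
    (mul_lt_mul_iff_right₀ hrR).2 hlt
  rw [← mul_assoc, mul_inv_cancel₀ (ne_of_gt hrR), one_mul] at h2
  exact_mod_cast h2

section Walk

variable {r : ℕ}

/-- Walk state: (part index, vertex, slack). -/
def Inv (G : SimpleGraph V) (φ : V → Fin r) (p : Fin r × V × ℕ) : Prop :=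
  p.2.1 ∈ part φ p.1 ∧ r * (degIn G (part φ p.1) p.2.1 + p.2.2) < G.degree p.2.1

def Link (G : SimpleGraph V) (φ : V → Fin r) (p q : Fin r × V × ℕ) : Prop :=
  q.1 ≠ p.1 ∧
  degIn G ((part φ q.1).erase q.2.1) p.2.1 + q.2.2
      ≥ degIn G (part φ p.1) p.2.1 + p.2.2 + 1 ∧
  degIn G (part φ q.1) p.2.1 ≥ degIn G (part φ p.1) p.2.1 + p.2.2 + 1

lemma step (hr : 0 < r) (φ : V → Fin r)
    (hno2 : ∀ (j : Fin r) (x : V), x ∉ part φ j → ¬ RelFull G (1/(r:ℝ)) (insert x (part φ j)))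
    (p : Fin r × V × ℕ) (hp : Inv G φ p) : ∃ q, Inv G φ q ∧ Link G φ p q := by
  obtain ⟨i, v, k⟩ := p
  obtain ⟨hv, hbad⟩ := hp
  dsimp only at hv hbad
  -- pigeonhole: some other part attracts v strongly
  have hex : ∃ j, j ≠ i ∧ G.degree v < r * degIn G (part φ j) v := by
    by_contra hcon
    push_neg at hcon
    have hsum : ∑ j, degIn G (part φ j) v = G.degree v := sum_degIn_part G φ v
    have hsplit : ∑ j ∈ (univ : Finset (Fin r)).erase i, degIn G (part φ j) v
        + degIn G (part φ i) v = G.degree v := by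
      rw [Finset.sum_erase_add _ _ (mem_univ i), hsum]
    have hb1 : ∑ j ∈ (univ : Finset (Fin r)).erase i, r * degIn G (part φ j) v
        ≤ (r - 1) * G.degree v := by
      have hcard : ((univ : Finset (Fin r)).erase i).card = r - 1 := by
        rw [Finset.card_erase_of_mem (mem_univ i), Finset.card_univ, Fintype.card_fin]
      calc ∑ j ∈ (univ : Finset (Fin r)).erase i, r * degIn G (part φ j) v
          ≤ ((univ : Finset (Fin r)).erase i).card • G.degree v :=
            Finset.sum_le_card_nsmul _ _ _ (fun j hj => hcon j (Finset.ne_of_mem_erase hj))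
        _ = (r - 1) * G.degree v := by rw [hcard, smul_eq_mul]
    have hb2 : r * G.degree v
        = r * degIn G (part φ i) v
          + ∑ j ∈ (univ : Finset (Fin r)).erase i, r * degIn G (part φ j) v := by
      rw [← Finset.mul_sum, ← hsplit]
      ring
    have hbad' : r * degIn G (part φ i) v + r * k < G.degree v := by
      have : r * (degIn G (part φ i) v + k) = r * degIn G (part φ i) v + r * k := by ring
      omega
    have hb4 : (r - 1) * G.degree v + G.degree v = r * G.degree v := by
      have h5 : r - 1 + 1 = r := by omega
      calc (r - 1) * G.degree v + G.degree v = (r - 1 + 1) * G.degree v := by ring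
        _ = r * G.degree v := by rw [h5]
    omega
  obtain ⟨j, hji, hjdeg⟩ := hex
  have hMk : degIn G (part φ i) v + k + 1 ≤ degIn G (part φ j) v := by
    have h1 : r * (degIn G (part φ i) v + k) < r * degIn G (part φ j) v :=
      lt_trans hbad hjdeg
    have := Nat.lt_of_mul_lt_mul_left h1
    omega
  have hvj : v ∉ part φ j := by
    rw [mem_part]
    intro hvj'
    exact hji (by rw [← hvj', (mem_part).1 hv])
  obtain ⟨u, hu, huu⟩ := not_relFull_extract G hr _ (hno2 j v hvj)
  have hdinsv : degIn G (insert v (part φ j)) v = degIn G (part φ j) v := by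
    rw [degIn_insert G _ v v hvj]
    simp
  have huv : u ≠ v := by
    intro h
    rw [h, hdinsv] at huu
    omega
  have humem : u ∈ part φ j := by
    rcases Finset.mem_insert.1 hu with h | h
    · exact absurd h huv
    · exact h
  have hdinsu : degIn G (insert v (part φ j)) u
      = degIn G (part φ j) u + (if G.Adj u v then 1 else 0) :=
    degIn_insert G _ v u hvj
  have herase : degIn G (part φ j) v
      = degIn G ((part φ j).erase u) v + (if G.Adj u v then 1 else 0) := by
    rw [degIn_erase G _ u v humem]
    congr 1
    exact if_congr (G.adj_comm v u) rfl rfl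
  refine ⟨(j, u, if G.Adj u v then 1 else 0), ⟨humem, ?_⟩, hji, ?_, ?_⟩
  · dsimp only
    rw [← hdinsu]
    exact huu
  · dsimp only
    omega
  · dsimp only
    omega

lemma walk_exists (hr : 0 < r) (φ : V → Fin r)
    (hno2 : ∀ (j : Fin r) (x : V), x ∉ part φ j → ¬ RelFull G (1/(r:ℝ)) (insert x (part φ j)))
    (p₀ : Fin r × V × ℕ) (hp₀ : Inv G φ p₀) :
    ∃ W : ℕ → Fin r × V × ℕ, (∀ t, Inv G φ (W t)) ∧ (∀ t, Link G φ (W t) (W (t+1))) := by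
  have hstep := step G hr φ hno2
  set f : (Fin r × V × ℕ) → (Fin r × V × ℕ) :=
    fun p => if h : Inv G φ p then Classical.choose (hstep p h) else p with hf_def
  have hf : ∀ p, Inv G φ p → Inv G φ (f p) ∧ Link G φ p (f p) := by
    intro p h
    rw [hf_def]
    simp only [dif_pos h]
    exact ⟨(Classical.choose_spec (hstep p h)).1, (Classical.choose_spec (hstep p h)).2⟩
  refine ⟨fun t => f^[t] p₀, ?_, ?_⟩
  · intro t
    induction t with
    | zero => exact hp₀
    | succ n ih =>
      simp only [Function.iterate_succ_apply']
      exact (hf _ ih).1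
  · intro t
    have hInv : ∀ t, Inv G φ (f^[t] p₀) := by
      intro t
      induction t with
      | zero => exact hp₀
      | succ n ih =>
        simp only [Function.iterate_succ_apply']
        exact (hf _ ih).1
    simp only [Function.iterate_succ_apply']
    exact (hf _ (hInv t)).2

end Walk

section Rotation

variable {r : ℕ}

lemma rotation (φ : V → Fin r) (ii : ℕ → Fin r) (vv : ℕ → V) (kk : ℕ → ℕ)
    (hmem : ∀ t, vv t ∈ part φ (ii t))
    (hA : ∀ t, degIn G ((part φ (ii (t+1))).erase (vv (t+1))) (vv t) + kk (t+1)
      ≥ degIn G (part φ (ii t)) (vv t) + kk t + 1)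
    (hB : ∀ t, degIn G (part φ (ii (t+1))) (vv t)
      ≥ degIn G (part φ (ii t)) (vv t) + kk t + 1)
    (a b : ℕ) (hab : a + 2 ≤ b) (hiab : ii a = ii b)
    (hinj : ∀ x y, x < b → y < b → ii x = ii y → x = y) :
    ∃ φ' : V → Fin r, (∀ p : Fin r, (part φ' p).card = (part φ p).card) ∧
      (∑ p, eW G (part φ p)) < ∑ p, eW G (part φ' p) := by
  have hvinj : ∀ l m', l < b → m' < b → vv l = vv m' → l = m' := by
    intro l m' hl hm' he
    apply hinj _ _ hl hm'
    have h1 : φ (vv l) = ii l := mem_part.1 (hmem l)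
    have h2 : φ (vv m') = ii m' := mem_part.1 (hmem m')
    rw [← h1, ← h2, he]
  set φ' : V → Fin r := fun w =>
    if h : ∃ l, (a ≤ l ∧ l < b) ∧ vv l = w then ii (Classical.choose h + 1) else φ w with hφ'
  have hmoved : ∀ l, a ≤ l → l < b → φ' (vv l) = ii (l + 1) := by
    intro l h1 h2
    have hM : ∃ l', (a ≤ l' ∧ l' < b) ∧ vv l' = vv l := ⟨l, ⟨h1, h2⟩, rfl⟩
    rw [hφ']
    simp only [dif_pos hM]
    obtain ⟨⟨h3, h4⟩, h5⟩ := Classical.choose_spec hM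
    rw [hvinj _ _ h4 h2 h5]
  have hunmoved : ∀ w, (∀ l, a ≤ l → l < b → vv l ≠ w) → φ' w = φ w := by
    intro w hw
    rw [hφ']
    simp only []
    rw [dif_neg]
    rintro ⟨l, ⟨h1, h2⟩, h3⟩
    exact hw l h1 h2 h3
  set pm : ℕ → ℕ := fun m => if m = a then b - 1 else m - 1 with hpm_def
  have hpma : pm a = b - 1 := by simp [hpm_def]
  have hpmne : ∀ m, m ≠ a → pm m = m - 1 := by
    intro m hm
    simp [hpm_def, hm]
  have hpm : ∀ m, a ≤ m → m < b →
      (a ≤ pm m ∧ pm m < b ∧ ii (pm m + 1) = ii m ∧ pm m ≠ m) := by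
    intro m h1 h2
    by_cases hma : m = a
    · subst hma
      rw [hpma]
      refine ⟨by omega, by omega, ?_, by omega⟩
      have hb1 : b - 1 + 1 = b := by omega
      rw [hb1, ← hiab]
    · rw [hpmne m hma]
      have hm1 : m - 1 + 1 = m := by omega
      refine ⟨by omega, by omega, by rw [hm1], by omega⟩
  have hpartm : ∀ m, a ≤ m → m < b →
      part φ' (ii m) = insert (vv (pm m)) ((part φ (ii m)).erase (vv m)) := by
    intro m h1 h2
    obtain ⟨hp1, hp2, hp3, hp4⟩ := hpm m h1 h2
    ext w
    simp only [Finset.mem_insert, Finset.mem_erase, mem_part]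
    by_cases hw : ∃ l, (a ≤ l ∧ l < b) ∧ vv l = w
    · obtain ⟨l, ⟨hl1, hl2⟩, rfl⟩ := hw
      rw [hmoved l hl1 hl2]
      constructor
      · intro he
        left
        by_cases hlb : l + 1 = b
        · have hia : ii a = ii m := by rw [hiab, ← hlb]; exact he
          have ham : a = m := hinj a m (by omega) h2 hia
          have hpml : pm m = l := by
            rw [← ham, hpma]
            omega
          rw [hpml]
        · have hlm : l + 1 = m := hinj (l+1) m (by omega) h2 he
          have hpml : pm m = l := by
            rw [hpmne m (by omega)]
            omega
          rw [hpml]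
      · intro hor
        rcases hor with he | ⟨hne, hfe⟩
        · have : l = pm m := hvinj l (pm m) hl2 hp2 he
          rw [this, hp3]
        · exfalso
          have hil : φ (vv l) = ii l := mem_part.1 (hmem l)
          have : l = m := hinj l m (by omega) h2 (by rw [← hil, hfe])
          exact hne (by rw [this])
    · have hwnm : ∀ l, a ≤ l → l < b → vv l ≠ w := fun l hl1 hl2 he => hw ⟨l, ⟨hl1, hl2⟩, he⟩
      rw [hunmoved w hwnm]
      constructor
      · intro he
        right
        exact ⟨fun hc => hwnm m h1 h2 hc.symm, he⟩
      · rintro (he | ⟨hne, hfe⟩)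
        · exact absurd he.symm (hwnm (pm m) hp1 hp2)
        · exact hfe
  have hpartother : ∀ p : Fin r, (∀ m, a ≤ m → m < b → ii m ≠ p) → part φ' p = part φ p := by
    intro p hp
    ext w
    rw [mem_part, mem_part]
    by_cases hw : ∃ l, (a ≤ l ∧ l < b) ∧ vv l = w
    · obtain ⟨l, ⟨hl1, hl2⟩, rfl⟩ := hw
      rw [hmoved l hl1 hl2]
      constructor
      · intro he
        exfalso
        by_cases hlb : l + 1 = b
        · refine hp a (le_refl a) (by omega) ?_
          rw [hiab, ← hlb]
          exact he
        · exact hp (l+1) (by omega) (by omega) he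
      · intro he
        exfalso
        have hil : φ (vv l) = ii l := mem_part.1 (hmem l)
        exact hp l hl1 hl2 (by rw [← hil, he])
    · rw [hunmoved w (fun l h1 h2 he => hw ⟨l, ⟨h1, h2⟩, he⟩)]
  have hvpm_notmem : ∀ m, a ≤ m → m < b → vv (pm m) ∉ part φ (ii m) := by
    intro m h1 h2
    obtain ⟨hp1, hp2, hp3, hp4⟩ := hpm m h1 h2
    intro hc
    have h5 : φ (vv (pm m)) = ii (pm m) := mem_part.1 (hmem (pm m))
    have h6 : φ (vv (pm m)) = ii m := mem_part.1 hc
    exact hp4 (hinj _ _ hp2 h2 (by rw [← h5, h6]))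
  have hcards : ∀ p : Fin r, (part φ' p).card = (part φ p).card := by
    intro p
    by_cases hp : ∃ m, a ≤ m ∧ m < b ∧ ii m = p
    · obtain ⟨m, h1, h2, rfl⟩ := hp
      rw [hpartm m h1 h2]
      have hvm : vv m ∈ part φ (ii m) := hmem m
      have hvpm : vv (pm m) ∉ (part φ (ii m)).erase (vv m) :=
        fun hc => hvpm_notmem m h1 h2 (Finset.mem_of_mem_erase hc)
      rw [Finset.card_insert_of_notMem hvpm, Finset.card_erase_of_mem hvm]
      have : 0 < (part φ (ii m)).card := Finset.card_pos.2 ⟨vv m, hvm⟩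
      omega
    · exact congrArg Finset.card
        (hpartother p (fun m hm1 hm2 he => hp ⟨m, hm1, hm2, he⟩))
  refine ⟨φ', hcards, ?_⟩
  -- now the edge-count comparison
  set I : Finset (Fin r) := (Finset.Ico a b).image ii with hI
  have hiinj : ∀ x ∈ Finset.Ico a b, ∀ y ∈ Finset.Ico a b, ii x = ii y → x = y := by
    intro x hx y hy he
    rw [Finset.mem_Ico] at hx hy
    exact hinj x y (by omega) (by omega) he
  have hsplit : ∀ ψ : V → Fin r,
      ∑ p, eW G (part ψ p) = ∑ p ∈ univ \ I, eW G (part ψ p) + ∑ p ∈ I, eW G (part ψ p) :=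
    fun ψ => (Finset.sum_sdiff (Finset.subset_univ I)).symm
  have hrest : ∑ p ∈ univ \ I, eW G (part φ' p) = ∑ p ∈ univ \ I, eW G (part φ p) := by
    refine Finset.sum_congr rfl fun p hp => ?_
    rw [Finset.mem_sdiff] at hp
    refine congrArg _ (hpartother p fun m hm1 hm2 he => hp.2 ?_)
    rw [hI]
    exact Finset.mem_image.2 ⟨m, Finset.mem_Ico.2 ⟨hm1, hm2⟩, he⟩
  have hima : ∀ ψ : V → Fin r,
      ∑ p ∈ I, eW G (part ψ p) = ∑ m ∈ Finset.Ico a b, eW G (part ψ (ii m)) := by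
    intro ψ
    rw [hI]
    exact Finset.sum_image hiinj
  -- per-index move equation
  have hmove : ∀ m ∈ Finset.Ico a b,
      eW G (part φ' (ii m)) + 2 * degIn G (part φ (ii m)) (vv m)
        = eW G (part φ (ii m)) + 2 * degIn G ((part φ (ii m)).erase (vv m)) (vv (pm m)) := by
    intro m hm
    rw [Finset.mem_Ico] at hm
    rw [hpartm m hm.1 hm.2]
    exact eW_move G _ (vv m) (vv (pm m)) (hmem m) (hvpm_notmem m hm.1 hm.2)
  have hsum1 : ∑ m ∈ Finset.Ico a b, eW G (part φ' (ii m))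
        + 2 * ∑ m ∈ Finset.Ico a b, degIn G (part φ (ii m)) (vv m)
      = ∑ m ∈ Finset.Ico a b, eW G (part φ (ii m))
        + 2 * ∑ m ∈ Finset.Ico a b, degIn G ((part φ (ii m)).erase (vv m)) (vv (pm m)) := by
    rw [Finset.mul_sum, Finset.mul_sum, ← Finset.sum_add_distrib, ← Finset.sum_add_distrib]
    exact Finset.sum_congr rfl hmove
  -- boundary estimate
  have hb1 : b - 1 + 1 = b := by omega
  have hIa : degIn G (part φ (ii (b-1))) (vv (b-1)) + kk (b-1)
      ≤ degIn G ((part φ (ii a)).erase (vv a)) (vv (pm a)) := by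
    rw [hpma]
    have hBb : degIn G (part φ (ii b)) (vv (b-1))
        ≥ degIn G (part φ (ii (b-1))) (vv (b-1)) + kk (b-1) + 1 := by
      have := hB (b-1)
      rw [hb1] at this
      exact this
    rw [← hiab] at hBb
    have hle : degIn G (part φ (ii a)) (vv (b-1))
        ≤ degIn G ((part φ (ii a)).erase (vv a)) (vv (b-1)) + 1 := by
      rw [degIn_erase G (part φ (ii a)) (vv a) (vv (b-1)) (hmem a)]
      split_ifs <;> omega
    omega
  -- middle estimates
  have hmid : ∀ t ∈ Finset.Ico a (b-1),
      degIn G (part φ (ii t)) (vv t) + kk t + 1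
        ≤ degIn G ((part φ (ii (t+1))).erase (vv (t+1))) (vv (pm (t+1))) + kk (t+1) := by
    intro t ht
    rw [Finset.mem_Ico] at ht
    have hpmt : pm (t+1) = t := by
      rw [hpmne (t+1) (by omega)]
      omega
    rw [hpmt]
    exact hA t
  have hshift : ∀ F : ℕ → ℕ,
      ∑ t ∈ Finset.Ico a (b-1), F (t+1) = ∑ m ∈ Finset.Ico (a+1) b, F m := by
    intro F
    rw [Finset.sum_Ico_eq_sum_range, Finset.sum_Ico_eq_sum_range]
    have hc : b - 1 - a = b - (a+1) := by omega
    rw [hc]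
    exact Finset.sum_congr rfl fun i _ => by rw [Nat.add_right_comm]
  have hkey : (∑ m ∈ Finset.Ico a b, degIn G (part φ (ii m)) (vv m)) + 1
      ≤ ∑ m ∈ Finset.Ico a b, degIn G ((part φ (ii m)).erase (vv m)) (vv (pm m)) := by
    have h1 : ∑ t ∈ Finset.Ico a (b-1),
          (degIn G (part φ (ii t)) (vv t) + kk t + 1)
        ≤ ∑ t ∈ Finset.Ico a (b-1),
          (degIn G ((part φ (ii (t+1))).erase (vv (t+1))) (vv (pm (t+1))) + kk (t+1)) :=
      Finset.sum_le_sum hmid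
    rw [Finset.sum_add_distrib, Finset.sum_add_distrib, Finset.sum_const, Nat.card_Ico,
      Finset.sum_add_distrib,
      hshift (fun m => degIn G ((part φ (ii m)).erase (vv m)) (vv (pm m))),
      hshift kk, smul_eq_mul, mul_one] at h1
    have hdec1 : ∑ m ∈ Finset.Ico a b, degIn G ((part φ (ii m)).erase (vv m)) (vv (pm m))
        = degIn G ((part φ (ii a)).erase (vv a)) (vv (pm a))
          + ∑ m ∈ Finset.Ico (a+1) b, degIn G ((part φ (ii m)).erase (vv m)) (vv (pm m)) :=
      Finset.sum_eq_sum_Ico_succ_bot (by omega) _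
    have hdec2 : ∑ m ∈ Finset.Ico a b, degIn G (part φ (ii m)) (vv m)
        = (∑ t ∈ Finset.Ico a (b-1), degIn G (part φ (ii t)) (vv t))
          + degIn G (part φ (ii (b-1))) (vv (b-1)) := by
      conv_lhs => rw [← hb1]
      exact Finset.sum_Ico_succ_top (by omega) _
    have hdec3 : ∑ m ∈ Finset.Ico a b, kk m
        = ∑ t ∈ Finset.Ico a (b-1), kk t + kk (b-1) := by
      conv_lhs => rw [← hb1]
      exact Finset.sum_Ico_succ_top (by omega) kk
    have hdec4 : ∑ m ∈ Finset.Ico a b, kk m = kk a + ∑ m ∈ Finset.Ico (a+1) b, kk m :=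
      Finset.sum_eq_sum_Ico_succ_bot (by omega) kk
    omega
  -- conclude
  rw [hsplit φ, hsplit φ', hrest, hima φ, hima φ']
  omega

end Rotation

end Stmt13

/-- for every positive integer `r`, an `n`-vertex graph contains a
relatively `(1/r)`-full subgraph on `⌊n/r⌋`, `⌈n/r⌉` or `⌈n/r⌉ + 1` vertices. -/
theorem stmt13 {V : Type*} [Fintype V] (G : SimpleGraph V) (r : ℕ) (hr : 0 < r) :
    ∃ S : Finset V, RelFull G (1/(r : ℝ)) S ∧
      (S.card = ⌊(Fintype.card V : ℝ) / r⌋₊ ∨ S.card = ⌈(Fintype.card V : ℝ) / r⌉₊ ∨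
       S.card = ⌈(Fintype.card V : ℝ) / r⌉₊ + 1) := by
  classical
  open Stmt13 Finset in
  have hrR : (0:ℝ) < r := by exact_mod_cast hr
  have hF : ⌊(Fintype.card V : ℝ)/(r:ℝ)⌋₊ = Fintype.card V / r := by
    rw [Nat.floor_div_natCast, Nat.floor_natCast]
  have hC1 : Fintype.card V % r = 0 →
      ⌈(Fintype.card V : ℝ)/(r:ℝ)⌉₊ = Fintype.card V / r := by
    intro hs0
    have hmul : Fintype.card V / r * r = Fintype.card V :=
      Nat.div_mul_cancel (Nat.dvd_of_mod_eq_zero hs0)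
    have heq : (Fintype.card V : ℝ) / (r:ℝ) = ((Fintype.card V / r : ℕ) : ℝ) := by
      rw [div_eq_iff (ne_of_gt hrR)]
      exact_mod_cast hmul.symm
    rw [heq, Nat.ceil_natCast]
  have hC2 : Fintype.card V % r ≠ 0 →
      ⌈(Fintype.card V : ℝ)/(r:ℝ)⌉₊ = Fintype.card V / r + 1 := by
    intro hs0
    have hslt : Fintype.card V % r < r := Nat.mod_lt _ hr
    have hdm := Nat.div_add_mod (Fintype.card V) r
    rw [Nat.ceil_eq_iff (by omega)]
    constructor
    · show ((Fintype.card V / r + 1 - 1 : ℕ) : ℝ) < _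
      rw [Nat.add_sub_cancel, lt_div_iff₀ hrR]
      have hx : Fintype.card V / r * r = r * (Fintype.card V / r) := Nat.mul_comm _ _
      exact_mod_cast (show Fintype.card V / r * r < Fintype.card V by omega)
    · rw [div_le_iff₀ hrR]
      have hx : (Fintype.card V / r + 1) * r = r * (Fintype.card V / r) + r := by ring
      exact_mod_cast (show Fintype.card V ≤ (Fintype.card V / r + 1) * r by omega)
  obtain ⟨φ₀, hφ₀⟩ := Stmt13.exists_bal (V := V) (r := r) hr
  set Bal : (V → Fin r) → Prop := fun ψ => ∀ i, (part ψ i).card = Fintype.card V / r ∨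
      ((part ψ i).card = Fintype.card V / r + 1 ∧ Fintype.card V % r ≠ 0) with hBal
  set 𝒞 : Finset (V → Fin r) := (Finset.univ).filter Bal with h𝒞
  have hne : 𝒞.Nonempty := ⟨φ₀, Finset.mem_filter.2 ⟨Finset.mem_univ _, hφ₀⟩⟩
  obtain ⟨φ, hφmem, hφmax⟩ :=
    Finset.exists_max_image 𝒞 (fun ψ => ∑ p, eW G (part ψ p)) hne
  have hbal : Bal φ := (Finset.mem_filter.1 hφmem).2
  by_cases h1 : ∃ i, RelFull G (1/(r:ℝ)) (part φ i)
  · obtain ⟨i, hi⟩ := h1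
    refine ⟨part φ i, hi, ?_⟩
    rcases hbal i with hc | ⟨hc, hs0⟩
    · left
      rw [hc, hF]
    · right; left
      rw [hc, hC2 hs0]
  by_cases h2 : ∃ i x, x ∉ part φ i ∧ RelFull G (1/(r:ℝ)) (insert x (part φ i))
  · obtain ⟨i, x, hx, hrel⟩ := h2
    refine ⟨insert x (part φ i), hrel, ?_⟩
    rw [Finset.card_insert_of_notMem hx]
    rcases hbal i with hc | ⟨hc, hs0⟩
    · rw [hc]
      by_cases hs0 : Fintype.card V % r = 0
      · right; right
        rw [hC1 hs0]
      · right; left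
        rw [hC2 hs0]
    · right; right
      rw [hc, hC2 hs0]
  exfalso
  push_neg at h1 h2
  have hno2 : ∀ (j : Fin r) (x : V), x ∉ part φ j →
      ¬ RelFull G (1/(r:ℝ)) (insert x (part φ j)) := fun j x hx => h2 j x hx
  obtain ⟨v₀, hv₀, hbad₀⟩ := not_relFull_extract G hr _ (h1 ⟨0, hr⟩)
  have hp₀ : Inv G φ (⟨0, hr⟩, v₀, 0) := by
    refine ⟨hv₀, ?_⟩
    dsimp only
    rw [Nat.add_zero]
    exact hbad₀
  obtain ⟨W, hWinv, hWlink⟩ := walk_exists G hr φ hno2 _ hp₀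
  have hpig : ∃ x y : Fin (r+1), x ≠ y ∧ (W x.val).1 = (W y.val).1 := by
    apply Fintype.exists_ne_map_eq_of_card_lt (fun t : Fin (r+1) => (W t.val).1)
    simp
  obtain ⟨x, y, hxy, hxyeq⟩ := hpig
  have hPex : ∃ t, ∃ l, l < t ∧ (W l).1 = (W t).1 := by
    have hvne : x.val ≠ y.val := fun h => hxy (Fin.ext h)
    rcases Nat.lt_or_ge x.val y.val with h | h
    · exact ⟨y.val, x.val, h, hxyeq⟩
    · exact ⟨x.val, y.val, by omega, hxyeq.symm⟩
  obtain ⟨a, hab, hiab⟩ := Nat.find_spec hPex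
  have hmin : ∀ t, t < Nat.find hPex → ¬ ∃ l, l < t ∧ (W l).1 = (W t).1 :=
    fun t ht => Nat.find_min hPex ht
  have hinj : ∀ x' y', x' < Nat.find hPex → y' < Nat.find hPex →
      (W x').1 = (W y').1 → x' = y' := by
    intro x' y' hx' hy' he
    rcases lt_trichotomy x' y' with h | h | h
    · exact absurd ⟨x', h, he⟩ (hmin y' hy')
    · exact h
    · exact absurd ⟨y', h, he.symm⟩ (hmin x' hx')
  have hab2 : a + 2 ≤ Nat.find hPex := by
    have hbne : Nat.find hPex ≠ a + 1 := by
      intro hb1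
      have hne := (hWlink a).1
      rw [← hb1] at hne
      exact hne hiab.symm
    omega
  obtain ⟨φ', hcards, hlt⟩ := rotation G φ (fun t => (W t).1) (fun t => (W t).2.1)
    (fun t => (W t).2.2) (fun t => (hWinv t).1) (fun t => (hWlink t).2.1)
    (fun t => (hWlink t).2.2) a (Nat.find hPex) hab2 hiab hinj
  have hbal' : Bal φ' := by
    intro i
    rw [hBal] at hbal
    rw [hcards i]
    exact hbal i
  have hmem' : φ' ∈ 𝒞 := Finset.mem_filter.2 ⟨Finset.mem_univ _, hbal'⟩
  exact absurd (hφmax φ' hmem') (not_le.2 hlt)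
end
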